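/- arXiv:2308.14283 — 2 statements merged into one kernel-verified Lean document; each statement's English description precedes it below -/
import Mathlib

section
/- If ‖G(t)‖ ≤ N e^{-ν|t|} for all t ∈ ℝ with N,ν > 0, and f : ℝ₊ → 𝔅 is continuous and bounded, then for 0 < L < l and 0 ≤ t ≤ L, the function φ(t) = ∫₀^∞ G(t-τ) f(τ) dτ satisfies max_{0≤t≤L} |φ(t)| ≤ (max_{0≤τ≤l} |f(τ)|) · max_{0≤t≤L} (N/ν)(2 - e^{-νt} - e^{ν(t-l)}) + (N/ν) ‖f‖ e^{ν(L-l)}, where ‖f‖ = sup_{t≥0} |f(t)|. -/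
open Set MeasureTheory

lemma myexp_interval (c a b : ℝ) (hc : c ≠ 0) :
    ∫ x in a..b, Real.exp (c * x) = (Real.exp (c * b) - Real.exp (c * a)) / c := by
  rw [intervalIntegral.integral_comp_mul_left (fun x => Real.exp x) hc,
    integral_exp, smul_eq_mul]
  ring

lemma myexp_Ioi (c a : ℝ) (hc : 0 < c) :
    ∫ x in Ioi a, Real.exp (-c * x) = Real.exp (-c * a) / c := by
  have h := integral_Ioi_of_hasDerivAt_of_tendsto'
    (f := fun x => -Real.exp (-c * x) / c) (f' := fun x => Real.exp (-c * x))
    (a := a) (m := 0) ?_ (exp_neg_integrableOn_Ioi a hc) ?_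
  · rw [h]; ring
  · intro x _
    have : HasDerivAt (fun x => -c * x) (-c) x := by
      simpa using (hasDerivAt_id x).const_mul (-c)
    have := (Real.hasDerivAt_exp (-c * x)).comp x this
    have h2 := (this.neg).div_const c
    convert h2 using 1
    · rfl
    · rfl
    · field_simp
  · have : Filter.Tendsto (fun x : ℝ => Real.exp (-c * x)) Filter.atTop (nhds 0) := by
      apply Real.tendsto_exp_atBot.comp
      exact Filter.Tendsto.const_mul_atTop_of_neg (by linarith) Filter.tendsto_id
    simpa using ((this.neg).div_const c)

theorem stmt4 {𝔅 : Type*} [NormedAddCommGroup 𝔅] [NormedSpace ℝ 𝔅] [CompleteSpace 𝔅]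
    (G : ℝ → 𝔅 →L[ℝ] 𝔅) (N ν : ℝ) (hN : 0 < N) (hν : 0 < ν)
    (hG : ∀ t : ℝ, ‖G t‖ ≤ N * Real.exp (-ν * |t|))
    (f : ℝ → 𝔅) (hf : ContinuousOn f (Ici 0))
    (C : ℝ) (hfb : ∀ t : ℝ, 0 ≤ t → ‖f t‖ ≤ C)
    (φ : ℝ → 𝔅) (hφ : ∀ t : ℝ, φ t = ∫ τ in Ioi (0 : ℝ), G (t - τ) (f τ))
    (L l : ℝ) (hL : 0 < L) (hLl : L < l) :
    (⨆ t : Icc (0 : ℝ) L, ‖φ t‖) ≤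
      (⨆ τ : Icc (0 : ℝ) l, ‖f τ‖) *
        (⨆ t : Icc (0 : ℝ) L,
          N / ν * (2 - Real.exp (-ν * t) - Real.exp (ν * ((t : ℝ) - l)))) +
      N / ν * (⨆ t : Ici (0 : ℝ), ‖f t‖) * Real.exp (ν * (L - l)) := by
  have hl : (0 : ℝ) < l := hL.trans hLl
  set A := ⨆ τ : Icc (0 : ℝ) l, ‖f τ‖ with hA
  set S := ⨆ t : Ici (0 : ℝ), ‖f t‖ with hS
  set B := ⨆ t : Icc (0 : ℝ) L,
      N / ν * (2 - Real.exp (-ν * t) - Real.exp (ν * ((t : ℝ) - l))) with hB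
  haveI : Nonempty (Icc (0 : ℝ) L) := ⟨⟨0, by simp [hL.le]⟩⟩
  haveI : Nonempty (Icc (0 : ℝ) l) := ⟨⟨0, by simp [hl.le]⟩⟩
  haveI : Nonempty (Ici (0 : ℝ)) := ⟨⟨0, by simp⟩⟩
  have hbddA : BddAbove (range fun τ : Icc (0 : ℝ) l => ‖f τ‖) := by
    refine ⟨C, ?_⟩
    rintro x ⟨⟨τ, hτ⟩, rfl⟩
    exact hfb τ hτ.1
  have hbddS : BddAbove (range fun t : Ici (0 : ℝ) => ‖f t‖) := by
    refine ⟨C, ?_⟩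
    rintro x ⟨⟨τ, hτ⟩, rfl⟩
    exact hfb τ hτ
  have hbddB : BddAbove (range fun t : Icc (0 : ℝ) L =>
      N / ν * (2 - Real.exp (-ν * t) - Real.exp (ν * ((t : ℝ) - l)))) := by
    refine ⟨N / ν * 2, ?_⟩
    rintro x ⟨⟨t, ht⟩, rfl⟩
    have h1 := Real.exp_pos (-ν * t)
    have h2 := Real.exp_pos (ν * (t - l))
    have hNν : 0 ≤ N / ν := by positivity
    simp only
    nlinarith
  have hAub : ∀ τ : ℝ, 0 ≤ τ → τ ≤ l → ‖f τ‖ ≤ A :=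
    fun τ h1 h2 => le_ciSup hbddA (⟨τ, h1, h2⟩ : Icc (0 : ℝ) l)
  have hSub : ∀ τ : ℝ, 0 ≤ τ → ‖f τ‖ ≤ S :=
    fun τ h1 => le_ciSup hbddS (⟨τ, h1⟩ : Ici (0 : ℝ))
  have hA0 : 0 ≤ A := (norm_nonneg (f 0)).trans (hAub 0 le_rfl hl.le)
  have hS0 : 0 ≤ S := (norm_nonneg (f 0)).trans (hSub 0 le_rfl)
  refine ciSup_le ?_
  rintro ⟨t, ht0, htL⟩
  simp only
  have htl : t < l := lt_of_le_of_lt htL hLl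
  set h : ℝ → ℝ := fun τ => N * Real.exp (-ν * |t - τ|) * (if τ ≤ l then A else S)
    with hh
  -- integrability
  have hcont : Continuous fun τ : ℝ => N * A * Real.exp (-ν * |t - τ|) := by
    fun_prop
  have int1 : IntegrableOn h (Ioc 0 l) := by
    refine (hcont.integrableOn_Ioc).congr_fun ?_ measurableSet_Ioc
    intro τ hτ
    simp only [hh, if_pos hτ.2]
    ring
  have eqon2 : EqOn (fun τ => N * Real.exp (ν * t) * S * Real.exp (-ν * τ)) h (Ioi l) := by
    intro τ hτ
    simp only [hh, if_neg (not_le.2 (mem_Ioi.1 hτ))]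
    have habs : |t - τ| = τ - t := by
      rw [abs_of_nonpos (by linarith [mem_Ioi.1 hτ])]; ring
    rw [habs]
    have : -ν * (τ - t) = ν * t + -ν * τ := by ring
    rw [this, Real.exp_add]
    ring
  have int2 : IntegrableOn h (Ioi l) := by
    refine IntegrableOn.congr_fun ?_ eqon2 measurableSet_Ioi
    exact (exp_neg_integrableOn_Ioi l hν).const_mul (N * Real.exp (ν * t) * S)
  have hint : IntegrableOn h (Ioi 0) := by
    rw [← Ioc_union_Ioi_eq_Ioi hl.le]
    exact int1.union int2
  -- pointwise bound
  have hle : ‖φ t‖ ≤ ∫ τ in Ioi (0 : ℝ), h τ := by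
    rw [hφ]
    refine (norm_integral_le_integral_norm _).trans ?_
    refine integral_mono_of_nonneg ?_ hint ?_
    · filter_upwards with τ using norm_nonneg _
    · rw [Filter.EventuallyLE, ae_restrict_iff' measurableSet_Ioi]
      filter_upwards with τ hτ
      have hτ0 : (0 : ℝ) < τ := hτ
      have h1 : ‖G (t - τ) (f τ)‖ ≤ ‖G (t - τ)‖ * ‖f τ‖ := (G (t - τ)).le_opNorm _
      have h2 : ‖G (t - τ)‖ * ‖f τ‖ ≤ (N * Real.exp (-ν * |t - τ|)) *
          (if τ ≤ l then A else S) := by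
        refine mul_le_mul (hG _) ?_ (norm_nonneg _) (by positivity)
        by_cases hτl : τ ≤ l
        · rw [if_pos hτl]; exact hAub τ hτ0.le hτl
        · rw [if_neg hτl]; exact hSub τ hτ0.le
      exact h1.trans h2
  -- split the integral
  have hsplit : ∫ τ in Ioi (0 : ℝ), h τ = (∫ τ in Ioc (0 : ℝ) l, h τ) +
      ∫ τ in Ioi l, h τ := by
    rw [← Ioc_union_Ioi_eq_Ioi hl.le,
      setIntegral_union (Ioc_disjoint_Ioi le_rfl) measurableSet_Ioi int1 int2]
  -- piece 1
  have hexp_cancel : Real.exp (-ν * t) * Real.exp (ν * t) = 1 := by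
    rw [← Real.exp_add]; norm_num
  have hexp_tl : Real.exp (ν * t) * Real.exp (-ν * l) = Real.exp (ν * (t - l)) := by
    rw [← Real.exp_add]; ring_nf
  have piece1 : ∫ τ in Ioc (0 : ℝ) l, h τ =
      A * (N / ν * (2 - Real.exp (-ν * t) - Real.exp (ν * (t - l)))) := by
    have e1 : ∫ τ in Ioc (0 : ℝ) l, h τ =
        ∫ τ in Ioc (0 : ℝ) l, N * A * Real.exp (-ν * |t - τ|) := by
      refine setIntegral_congr_fun measurableSet_Ioc ?_
      intro τ hτ
      simp only [hh, if_pos hτ.2]; ring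
    rw [e1, ← intervalIntegral.integral_of_le hl.le,
      ← intervalIntegral.integral_add_adjacent_intervals (a := (0:ℝ)) (b := t) (c := l)
        (hcont.intervalIntegrable _ _) (hcont.intervalIntegrable _ _)]
    have e2 : ∫ τ in (0:ℝ)..t, N * A * Real.exp (-ν * |t - τ|) =
        ∫ τ in (0:ℝ)..t, (N * A * Real.exp (-ν * t)) * Real.exp (ν * τ) := by
      refine intervalIntegral.integral_congr ?_
      intro τ hτ
      rw [uIcc_of_le ht0] at hτ
      show N * A * Real.exp (-ν * |t - τ|) = N * A * Real.exp (-ν * t) * Real.exp (ν * τ)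
      have h5 : |t - τ| = t - τ := abs_of_nonneg (by linarith [hτ.2])
      have h6 : -ν * (t - τ) = -ν * t + ν * τ := by ring
      rw [h5, h6, Real.exp_add]; ring
    have e3 : ∫ τ in t..l, N * A * Real.exp (-ν * |t - τ|) =
        ∫ τ in t..l, (N * A * Real.exp (ν * t)) * Real.exp (-ν * τ) := by
      refine intervalIntegral.integral_congr ?_
      intro τ hτ
      rw [uIcc_of_le htl.le] at hτ
      show N * A * Real.exp (-ν * |t - τ|) = N * A * Real.exp (ν * t) * Real.exp (-ν * τ)
      have h5 : |t - τ| = -(t - τ) := abs_of_nonpos (by linarith [hτ.1])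
      have h6 : -ν * -(t - τ) = ν * t + -ν * τ := by ring
      rw [h5, h6, Real.exp_add]; ring
    rw [e2, e3, intervalIntegral.integral_const_mul, intervalIntegral.integral_const_mul,
      myexp_interval ν 0 t hν.ne', myexp_interval (-ν) t l (by linarith)]
    simp only [mul_zero, Real.exp_zero]
    have hν' : ν ≠ 0 := hν.ne'
    linear_combination (2 * N * A / ν) * hexp_cancel - (N * A / ν) * hexp_tl
  -- piece 2
  have piece2 : ∫ τ in Ioi l, h τ = N / ν * S * Real.exp (ν * (t - l)) := by
    rw [setIntegral_congr_fun measurableSet_Ioi eqon2.symm, MeasureTheory.integral_const_mul,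
      myexp_Ioi ν l hν]
    have hν' : ν ≠ 0 := hν.ne'
    linear_combination (N * S / ν) * hexp_tl
  have hgB : N / ν * (2 - Real.exp (-ν * t) - Real.exp (ν * (t - l))) ≤ B :=
    le_ciSup hbddB (⟨t, ht0, htL⟩ : Icc (0 : ℝ) L)
  have h2 : N / ν * S * Real.exp (ν * (t - l)) ≤ N / ν * S * Real.exp (ν * (L - l)) := by
    have he : Real.exp (ν * (t - l)) ≤ Real.exp (ν * (L - l)) :=
      Real.exp_le_exp.2 (by nlinarith)
    exact mul_le_mul_of_nonneg_left he (by positivity)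
  calc ‖φ t‖ ≤ ∫ τ in Ioi (0 : ℝ), h τ := hle
    _ = A * (N / ν * (2 - Real.exp (-ν * t) - Real.exp (ν * (t - l)))) +
        N / ν * S * Real.exp (ν * (t - l)) := by rw [hsplit, piece1, piece2]
    _ ≤ A * B + N / ν * S * Real.exp (ν * (L - l)) :=
        add_le_add (mul_le_mul_of_nonneg_left hgB hA0) h2
end

section
/- Let f : 𝕋 → 𝔅 (𝕋 = ℝ or ℝ₊) be continuous with (1/T)|∫_t^{t+T} f(s) ds| → 0 as T → +∞, uniformly in t ∈ 𝕋. Then f(t/ε) 'integrally converges' to 0 as ε → 0⁺: for every L > 0, sup_{|t-s|≤L, t,s∈𝕋} |∫_s^t f(τ/ε) dτ| → 0 as ε → 0⁺. -/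
open Set Filter Topology intervalIntegral

theorem stmt14 {𝔅 : Type*} [NormedAddCommGroup 𝔅] [NormedSpace ℝ 𝔅] [CompleteSpace 𝔅]
    (f : ℝ → 𝔅) (hf : ContinuousOn f (Ici 0))
    (havg : ∀ δ : ℝ, 0 < δ → ∃ T₀ : ℝ, 0 < T₀ ∧ ∀ T : ℝ, T₀ ≤ T →
      ∀ t : ℝ, 0 ≤ t → ‖∫ s in t..(t + T), f s‖ ≤ δ * T) :
    ∀ L : ℝ, 0 < L → ∀ δ : ℝ, 0 < δ → ∃ ε₀ : ℝ, 0 < ε₀ ∧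
      ∀ ε : ℝ, 0 < ε → ε ≤ ε₀ →
        ∀ t s : ℝ, 0 ≤ t → 0 ≤ s → |t - s| ≤ L →
          ‖∫ τ in s..t, f (τ / ε)‖ < δ := by
  intro L hL δ hδ
  set δ' : ℝ := δ / (2 * (L + 1)) with hδ'def
  have hδ' : 0 < δ' := div_pos hδ (by linarith)
  obtain ⟨T₀, hT₀, hbound⟩ := havg δ' hδ'
  -- integrability on nonneg intervals
  have hint : ∀ a b : ℝ, 0 ≤ a → 0 ≤ b → IntervalIntegrable f MeasureTheory.volume a b := by
    intro a b ha hb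
    apply ContinuousOn.intervalIntegrable
    exact hf.mono (fun x hx => le_trans (le_min ha hb) hx.1)
  -- key: for a ≥ 0, h ≥ 0, obtain bound δ' * (2*T₀ + h)
  have key : ∀ a h : ℝ, 0 ≤ a → 0 ≤ h → ‖∫ s in a..(a + h), f s‖ ≤ δ' * (2 * T₀ + h) := by
    intro a h ha hh
    have h1 : ‖∫ s in a..(a + (T₀ + h)), f s‖ ≤ δ' * (T₀ + h) :=
      hbound (T₀ + h) (by linarith) a ha
    have h2 : ‖∫ s in (a + h)..((a + h) + T₀), f s‖ ≤ δ' * T₀ :=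
      hbound T₀ le_rfl (a + h) (by linarith)
    have hadd : (∫ s in a..(a + h), f s) + ∫ s in (a+h)..(a + (T₀ + h)), f s
        = ∫ s in a..(a + (T₀ + h)), f s :=
      intervalIntegral.integral_add_adjacent_intervals
        (hint a (a + h) ha (by linarith))
        (hint (a + h) (a + (T₀ + h)) (by linarith) (by linarith))
    have heq : (∫ s in a..(a + h), f s)
        = (∫ s in a..(a + (T₀ + h)), f s) - ∫ s in (a+h)..((a+h) + T₀), f s := by
      rw [show (a + h) + T₀ = a + (T₀ + h) by ring, ← hadd]; abel
    rw [heq]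
    calc ‖(∫ s in a..(a + (T₀ + h)), f s) - ∫ s in (a+h)..((a+h) + T₀), f s‖
        ≤ ‖∫ s in a..(a + (T₀ + h)), f s‖ + ‖∫ s in (a+h)..((a+h) + T₀), f s‖ :=
          norm_sub_le _ _
      _ ≤ δ' * (T₀ + h) + δ' * T₀ := add_le_add h1 h2
      _ ≤ δ' * (2 * T₀ + h) := by nlinarith
  refine ⟨min 1 (1 / (2 * T₀)), lt_min one_pos (by positivity), ?_⟩
  intro ε hε hεle t s ht hs hts
  -- reduce to s ≤ t
  wlog hst : s ≤ t generalizing s t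
  · rw [intervalIntegral.integral_symm, norm_neg]
    exact this s t hs ht (by rwa [abs_sub_comm]) (le_of_not_ge hst)
  have hεne : ε ≠ 0 := ne_of_gt hε
  rw [intervalIntegral.integral_comp_div f hεne, norm_smul, Real.norm_eq_abs,
    abs_of_pos hε]
  have hdiv : t / ε = s / ε + (t - s) / ε := by field_simp; ring
  have hkey := key (s / ε) ((t - s) / ε) (by positivity)
    (by apply div_nonneg <;> linarith)
  rw [← hdiv] at hkey
  have hεT : 2 * T₀ * ε ≤ 1 := by
    have h2 : ε ≤ 1 / (2 * T₀) := le_trans hεle (min_le_right _ _)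
    rw [le_div_iff₀ (by positivity)] at h2
    linarith
  have htsL : t - s ≤ L := by rw [abs_le] at hts; linarith
  calc ε * ‖∫ x in s / ε..(t / ε), f x‖
      ≤ ε * (δ' * (2 * T₀ + (t - s) / ε)) := by
        exact mul_le_mul_of_nonneg_left hkey (le_of_lt hε)
    _ = δ' * (2 * T₀ * ε + (t - s)) := by field_simp
    _ ≤ δ' * (1 + L) := by
        apply mul_le_mul_of_nonneg_left _ (le_of_lt hδ'); linarith
    _ < δ := by
        rw [hδ'def, div_mul_eq_mul_div, div_lt_iff₀ (by linarith)]
        nlinarith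
end
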